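/- Let (v₀,…,v_h), h ≥ 2, be a characteristic sequence with v₁ < v₀. If v₀ is not a multiple of v₁, then (v₁,v₀,v₂,…,v_h) is a characteristic sequence; if v₀ is a multiple of v₁, then (v₁,v₂,…,v_h) is a characteristic sequence. -/

import Mathlib

/-- A numerical semigroup: a subset of ℕ containing 0, closed under addition,
with finite complement. -/
def IsNumericalSemigroup (S : Set ℕ) : Prop :=
  0 ∈ S ∧ (∀ a ∈ S, ∀ b ∈ S, a + b ∈ S) ∧ Sᶜ.Finite

/-- Frobenius number, as an integer (so that F(ℕ) = -1). -/
noncomputable def Frob (S : Set ℕ) : ℤ :=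
  sSup (((fun n : ℕ => (n : ℤ)) '' Sᶜ) ∪ {-1})

/-- Submonoid of ℕ generated by a set. -/
def GenSg (A : Set ℕ) : Set ℕ := (AddSubmonoid.closure A : Set ℕ)

/-- The gluing S ⊕_{d,γ} ℕ = d·S + ℕ·γ. -/
def Gluing (S : Set ℕ) (d γ : ℕ) : Set ℕ :=
  {x | ∃ s ∈ S, ∃ k : ℕ, x = d * s + k * γ}

/-- e_k = gcd(v₀, …, v_k). -/
def ee (v : ℕ → ℕ) (k : ℕ) : ℕ := (Finset.range (k + 1)).gcd v

/-- (v₀,…,v_h) is a characteristic sequence. -/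
def IsCharSeq (h : ℕ) (v : ℕ → ℕ) : Prop :=
  (∀ i ≤ h, 0 < v i) ∧
  (∀ k, 1 ≤ k → k ≤ h → ee v k < ee v (k - 1)) ∧
  ee v h = 1 ∧
  ∀ k, 1 ≤ k → k + 1 ≤ h → ee v (k - 1) * v k < ee v k * v (k + 1)

/-- T is a GSI-semigroup: T = S ⊕_{d,γ} ℕ where S = ⟨A⟩ is a numerical
semigroup, d ≥ 2, gcd(d,γ)=1 and γ > max{d·F(S), d·(max A)}. -/
def IsGSI (T : Set ℕ) : Prop :=
  ∃ (A : Finset ℕ) (d γ : ℕ), A.Nonempty ∧ 2 ≤ d ∧ Nat.Coprime d γ ∧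
    IsNumericalSemigroup (GenSg ↑A) ∧
    (γ : ℤ) > d * Frob (GenSg ↑A) ∧ (∀ a ∈ A, d * a < γ) ∧
    T = Gluing (GenSg ↑A) d γ

lemma ee_zero' (v : ℕ → ℕ) : ee v 0 = v 0 := by simp [ee]

lemma ee_succ' (v : ℕ → ℕ) (k : ℕ) : ee v (k+1) = Nat.gcd (v (k+1)) (ee v k) := by
  rw [ee, ee, Finset.range_add_one, Finset.gcd_insert]; rfl

lemma ee_dvd' (v : ℕ → ℕ) {i k : ℕ} (hik : i ≤ k) : ee v k ∣ v i :=
  Finset.gcd_dvd (Finset.mem_range.2 (Nat.lt_succ_of_le hik))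

lemma ee_swap' (v : ℕ → ℕ) : ∀ k, 1 ≤ k →
    ee (fun i => if i = 0 then v 1 else if i = 1 then v 0 else v i) k = ee v k := by
  intro k hk
  induction k with
  | zero => omega
  | succ m ih =>
    rcases Nat.eq_zero_or_pos m with hm | hm
    · subst hm
      rw [ee_succ', ee_succ', ee_zero', ee_zero']
      simp [Nat.gcd_comm]
    · rw [ee_succ', ee_succ', ih hm]
      have h0 : m + 1 ≠ 0 := by omega
      have h1 : m + 1 ≠ 1 := by omega
      simp [h0, h1, hm.ne']

lemma ee_shift' (v : ℕ → ℕ) (hd : v 1 ∣ v 0) :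
    ∀ k, ee (fun i => v (i + 1)) k = ee v (k + 1) := by
  intro k
  induction k with
  | zero =>
    rw [ee_zero', ee_succ', ee_zero']
    exact (Nat.gcd_eq_left hd).symm
  | succ m ih =>
    rw [ee_succ', ih, ee_succ' v (m+1)]

theorem charseq_swap (h : ℕ) (v : ℕ → ℕ) (hh : 2 ≤ h)
    (hv : IsCharSeq h v) (hlt : v 1 < v 0) :
    (¬ v 1 ∣ v 0 →
      IsCharSeq h (fun i => if i = 0 then v 1 else if i = 1 then v 0 else v i)) ∧
    (v 1 ∣ v 0 → IsCharSeq (h - 1) (fun i => v (i + 1))) := by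
  obtain ⟨hpos, hdec, htop, hgrow⟩ := hv
  constructor
  · intro hnd
    set w : ℕ → ℕ := fun i => if i = 0 then v 1 else if i = 1 then v 0 else v i with hw
    have hw0 : w 0 = v 1 := rfl
    have hw1 : w 1 = v 0 := rfl
    have hwk : ∀ k, 2 ≤ k → w k = v k := by
      intro k hk
      simp only [hw]
      have h1 : k ≠ 0 := by omega
      have h2 : k ≠ 1 := by omega
      simp [h1, h2]
    have he1lt : ee v 1 < v 1 := by
      have hd1 : ee v 1 ∣ v 1 := ee_dvd' v (le_refl 1)
      have hd0 : ee v 1 ∣ v 0 := ee_dvd' v (by omega)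
      have hle : ee v 1 ≤ v 1 := Nat.le_of_dvd (hpos 1 (by omega)) hd1
      rcases lt_or_eq_of_le hle with h' | h'
      · exact h'
      · exact absurd (h' ▸ hd0) hnd
    refine ⟨?_, ?_, ?_, ?_⟩
    · intro i hi
      simp only [hw]
      split
      · exact hpos 1 (by omega)
      · split
        · exact hpos 0 (by omega)
        · exact hpos i hi
    · intro k hk1 hkh
      obtain ⟨m, rfl⟩ := Nat.exists_eq_add_of_le hk1
      rcases Nat.eq_zero_or_pos m with hm | hm
      · subst hm
        simpa [show ee w 1 = ee v 1 from ee_swap' v 1 (le_refl 1), ee_zero', hw0] using he1lt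
      · have h1 : 1 ≤ 1 + m := by omega
        have h2 : 1 ≤ 1 + m - 1 := by omega
        rw [ee_swap' v (1 + m) h1, ee_swap' v (1 + m - 1) h2]
        exact hdec (1 + m) h1 hkh
    · rw [ee_swap' v h (by omega)]; exact htop
    · intro k hk1 hkh
      obtain ⟨m, rfl⟩ := Nat.exists_eq_add_of_le hk1
      rcases Nat.eq_zero_or_pos m with hm | hm
      · subst hm
        have := hgrow 1 (le_refl 1) (by omega)
        rw [ee_zero'] at this
        have e2 : (1 : ℕ) + 0 + 1 = 2 := rfl
        rw [ee_swap' v (1 + 0) (by omega)]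
        simp only [Nat.add_zero] at *
        rw [show (1 : ℕ) - 1 = 0 from rfl, ee_zero', hw0, hw1, hwk 2 (le_refl 2)]
        calc v 1 * v 0 = v 0 * v 1 := Nat.mul_comm _ _
          _ < ee v 1 * v 2 := this
      · have h1 : 1 ≤ 1 + m := by omega
        rw [ee_swap' v (1 + m) h1, ee_swap' v (1 + m - 1) (by omega),
          hwk (1 + m) (by omega), hwk (1 + m + 1) (by omega)]
        exact hgrow (1 + m) h1 hkh
  · intro hd
    refine ⟨?_, ?_, ?_, ?_⟩
    · intro i hi
      exact hpos (i + 1) (by omega)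
    · intro k hk1 hkh
      obtain ⟨m, rfl⟩ := Nat.exists_eq_add_of_le hk1
      rw [ee_shift' v hd, ee_shift' v hd]
      have : 1 + m - 1 + 1 = 1 + m := by omega
      rw [this]
      exact hdec (1 + m + 1) (by omega) (by omega)
    · rw [ee_shift' v hd]
      have : h - 1 + 1 = h := by omega
      rw [this]; exact htop
    · intro k hk1 hkh
      obtain ⟨m, rfl⟩ := Nat.exists_eq_add_of_le hk1
      rw [ee_shift' v hd, ee_shift' v hd]
      have e1 : 1 + m - 1 + 1 = 1 + m := by omega
      rw [e1]
      have := hgrow (1 + m + 1) (by omega) (by omega)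
      have e2 : 1 + m + 1 - 1 = 1 + m := by omega
      rw [e2] at this
      simpa [add_assoc, add_comm, add_left_comm] using this
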